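/- Let Γμ: ℝ^N_+ → ℝ^N_+ be monotone, let κ_0 > 0, κ_Γ > κ_h > 0, δ > 0, and let φ(v) = Γμ(v)·(1 + min{0, (κ_Γ − 2‖v‖)/(‖v‖ + κ_0)}) + max{0, κ_h − 2‖v‖}·e. Let c ∈ ℝ^N satisfy c ≫ 0 and ‖c‖ < κ_Γ/2. Let y^1, …, y^{N+1} be the vertices of an N-simplex of the two-layered triangulation K̃_1(δ), written y^j = (v^j, t_j) with v^j ∈ ℝ^N_+ and t_j ∈ {0, 1}: that is, y^{j+1} = y^j + d^j for j = 1, …, N, where the increments d^j are pairwise distinct elements of {δe_1, …, δe_N, e_{N+1}} (e_i the i-th standard basis vector of ℝ^{N+1}). Assume ‖v^j‖ > κ_Γ + κ_0 + δ for all j = 1, …, N+1. Define labels l(y^j) = (1 − t_j)c + t_j φ(v^j) − v^j and the (N+1)×(N+1) labeling matrix L whose j-th column is (1, l(y^j)^T)^T. Then the simplex is not complete: there is no matrix W ∈ ℝ^{(N+1)×(N+1)} with L·W = I_{N+1} such that every row of W is lexicographically positive. -/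

import Mathlib

/-- A row vector is lexicographically positive if its first nonzero entry is
positive. -/
def LexPosRow {n : ℕ} (w : Fin n → ℝ) : Prop :=
  ∃ j, 0 < w j ∧ ∀ i, i < j → w i = 0

def LexNP {n : ℕ} (w : Fin n → ℝ) : Prop :=
  ∀ j, (∀ i, i < j → w i = 0) → w j ≤ 0

lemma lexNP_zero {n : ℕ} : LexNP (0 : Fin n → ℝ) := fun _ _ => le_refl 0

lemma lexNP_add {n : ℕ} {u w : Fin n → ℝ} (hu : LexNP u) (hw : LexNP w) :
    LexNP (u + w) := by
  intro j hj
  have key : ∀ m : ℕ, ∀ hm : m < n, (⟨m, hm⟩ : Fin n) < j →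
      u ⟨m, hm⟩ = 0 ∧ w ⟨m, hm⟩ = 0 := by
    intro m
    induction m using Nat.strong_induction_on with
    | _ m ih =>
      intro hm hmj
      have hz : ∀ i : Fin n, i < (⟨m, hm⟩ : Fin n) → u i = 0 ∧ w i = 0 := by
        intro i hi
        have h := ih i.val hi i.isLt (lt_trans (by simpa using hi) hmj)
        simpa using h
      have hu0 : u ⟨m, hm⟩ ≤ 0 := hu _ (fun i hi => (hz i hi).1)
      have hw0 : w ⟨m, hm⟩ ≤ 0 := hw _ (fun i hi => (hz i hi).2)
      have hsum : u ⟨m, hm⟩ + w ⟨m, hm⟩ = 0 := by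
        have := hj ⟨m, hm⟩ hmj; simpa using this
      constructor <;> linarith
  have hzu : ∀ i, i < j → u i = 0 := by
    intro i hi
    have := key i.val i.isLt (by simpa using hi)
    simpa using this.1
  have hzw : ∀ i, i < j → w i = 0 := by
    intro i hi
    have := key i.val i.isLt (by simpa using hi)
    simpa using this.2
  have := hu j hzu
  have := hw j hzw
  have : u j + w j ≤ 0 := by linarith
  simpa using this

lemma lexNP_smul {n : ℕ} {w : Fin n → ℝ} {a : ℝ} (ha : a ≤ 0)
    (hw : LexPosRow w) : LexNP (a • w) := by
  obtain ⟨j0, hpos, hz⟩ := hw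
  intro j hj
  rcases lt_trichotomy j j0 with h | h | h
  · simp [hz j h]
  · subst h
    simp only [Pi.smul_apply, smul_eq_mul]
    exact mul_nonpos_of_nonpos_of_nonneg ha hpos.le
  · have h0 : a * w j0 = 0 := by have := hj j0 h; simpa using this
    have ha0 : a = 0 := by
      rcases mul_eq_zero.mp h0 with h' | h'
      · exact h'
      · exact absurd h' hpos.ne'
    simp [ha0]

lemma lexNP_sum {n : ℕ} {ι : Type*} (s : Finset ι) (f : ι → Fin n → ℝ)
    (h : ∀ i ∈ s, LexNP (f i)) : LexNP (∑ i ∈ s, f i) := by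
  classical
  induction s using Finset.induction_on with
  | empty => simpa using lexNP_zero
  | insert _ _ hna ih =>
    rw [Finset.sum_insert hna]
    exact lexNP_add (h _ (Finset.mem_insert_self _ _))
      (ih fun i hi => h i (Finset.mem_insert_of_mem hi))

/-- Proposition (no complete simplices far out): let `Γμ : ℝ^N_+ → ℝ^N_+` be
monotone, `φ` as in the paper, `c ≫ 0` with `‖c‖ < κ_Γ/2`, and let
`y^j = (v^j, t_j)` be the vertices of an `N`-simplex of the two-layered
triangulation `K̃₁(δ)` (i.e. `y^{j+1} = y^j + d^j` with pairwise distinct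
increments from `{δe_1, …, δe_N, e_{N+1}}`).  If `‖v^j‖ > κ_Γ + κ_0 + δ`
for all `j` (the simplex lies in region `Ⅴ'`), then the simplex is not
complete. -/
theorem no_complete_simplex_in_region_five
    {N : ℕ} (hN : 0 < N)
    (Γμ : EuclideanSpace ℝ (Fin N) → EuclideanSpace ℝ (Fin N))
    (hmaps : ∀ v : EuclideanSpace ℝ (Fin N), (∀ i, 0 ≤ v i) → ∀ i, 0 ≤ Γμ v i)
    (hmono : ∀ v w : EuclideanSpace ℝ (Fin N), (∀ i, 0 ≤ v i) → (∀ i, 0 ≤ w i) →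
      (∀ i, v i ≤ w i) → ∀ i, Γμ v i ≤ Γμ w i)
    (κ₀ κΓ κh δ : ℝ) (hκ₀ : 0 < κ₀) (hκh : 0 < κh) (hκΓ : κh < κΓ) (hδ : 0 < δ)
    (φ : EuclideanSpace ℝ (Fin N) → EuclideanSpace ℝ (Fin N))
    (hφ : ∀ (v : EuclideanSpace ℝ (Fin N)) (i : Fin N),
      φ v i = Γμ v i * (1 + min 0 ((κΓ - 2 * ‖v‖) / (‖v‖ + κ₀)))
        + max 0 (κh - 2 * ‖v‖))
    (c : EuclideanSpace ℝ (Fin N)) (hc : ∀ i, 0 < c i) (hcnorm : ‖c‖ < κΓ / 2)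
    -- the vertices `y^j = (v^j, t_j)` of an `N`-simplex of `K̃₁(δ)`
    (v : Fin (N + 1) → EuclideanSpace ℝ (Fin N)) (t : Fin (N + 1) → ℝ)
    (hvnonneg : ∀ j i, 0 ≤ v j i) (ht01 : ∀ j, t j = 0 ∨ t j = 1)
    (d : Fin N → EuclideanSpace ℝ (Fin N) × ℝ)
    (hdinj : Function.Injective d)
    (hdmem : ∀ j : Fin N,
      (∃ i : Fin N, d j = (δ • EuclideanSpace.single i (1 : ℝ), (0 : ℝ))) ∨
        d j = (0, 1))
    (hstep : ∀ j : Fin N,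
      v j.succ = v j.castSucc + (d j).1 ∧ t j.succ = t j.castSucc + (d j).2)
    -- the simplex lies in region Ⅴ'
    (hfar : ∀ j, κΓ + κ₀ + δ < ‖v j‖)
    -- the labels and the labeling matrix
    (lab : Fin (N + 1) → EuclideanSpace ℝ (Fin N))
    (hlab : ∀ j, lab j = (1 - t j) • c + t j • φ (v j) - v j)
    (L : Matrix (Fin (N + 1)) (Fin (N + 1)) ℝ)
    (hLtop : ∀ j, L 0 j = 1)
    (hLrow : ∀ (i : Fin N) (j : Fin (N + 1)), L i.succ j = lab j i) :
    ¬ ∃ W : Matrix (Fin (N + 1)) (Fin (N + 1)) ℝ,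
        L * W = 1 ∧ ∀ i, LexPosRow (W i) := by
  rintro ⟨W, hLW, hWpos⟩
  have hκΓpos : 0 < κΓ := lt_trans hκh hκΓ
  -- the test vector q = (0, v 0)
  set q : Fin (N + 1) → ℝ := Fin.cases 0 (fun i => v 0 i) with hqdef
  have hq0 : q 0 = 0 := rfl
  have hqsucc : ∀ i : Fin N, q i.succ = v 0 i := fun i => rfl
  set α : Fin (N + 1) → ℝ := fun j => ∑ k, q k * L k j with hαdef
  -- each increment has nonnegative first component
  have hd1 : ∀ j : Fin N, ∀ i, 0 ≤ (d j).1 i := by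
    intro j i
    rcases hdmem j with ⟨i', h⟩ | h
    · rw [h]
      simp only [PiLp.smul_apply, EuclideanSpace.single_apply, smul_eq_mul]
      split_ifs <;> simp [hδ.le]
    · rw [h]
      simp
  -- v 0 ≤ v j componentwise
  have hchain : ∀ j : Fin (N + 1), ∀ i, v 0 i ≤ v j i := by
    intro j
    induction j using Fin.induction with
    | zero => intro i; exact le_refl _
    | succ j ih =>
      intro i
      rw [(hstep j).1]
      have h1 := hd1 j i
      have h2 := ih i
      simp only [PiLp.add_apply]
      linarith
  -- φ(v j) is componentwise nonpositive in region Ⅴ'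
  have hφnp : ∀ j : Fin (N + 1), ∀ i, φ (v j) i ≤ 0 := by
    intro j i
    have hv := hfar j
    have hden : 0 < ‖v j‖ + κ₀ := by
      have := norm_nonneg (v j); linarith
    have hmin : min 0 ((κΓ - 2 * ‖v j‖) / (‖v j‖ + κ₀))
        = (κΓ - 2 * ‖v j‖) / (‖v j‖ + κ₀) := by
      apply min_eq_right
      rw [div_nonpos_iff]
      right
      constructor <;> linarith
    have hmax : max 0 (κh - 2 * ‖v j‖) = 0 := max_eq_left (by linarith)
    have hfac : 1 + (κΓ - 2 * ‖v j‖) / (‖v j‖ + κ₀) ≤ 0 := by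
      have : (κΓ - 2 * ‖v j‖) / (‖v j‖ + κ₀) ≤ -1 := by
        rw [div_le_iff₀ hden]; linarith
      linarith
    have hΓ : 0 ≤ Γμ (v j) i := hmaps _ (hvnonneg j) i
    rw [hφ, hmin, hmax]
    have := mul_nonpos_of_nonneg_of_nonpos hΓ hfac
    linarith
  -- norms
  have hv0pos : 0 < ‖v 0‖ := by have := hfar 0; linarith
  have hcv : ‖c‖ < ‖v 0‖ := by have := hfar 0; linarith
  -- α j ≤ 0
  have hα : ∀ j, α j ≤ 0 := by
    intro j
    have hαeq : α j = ∑ i : Fin N, v 0 i * lab j i := by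
      have h0 : α j = ∑ k, q k * L k j := rfl
      rw [h0, Fin.sum_univ_succ]
      simp [hq0, hqsucc, hLtop, hLrow]
    have hterm : ∀ i, v 0 i * lab j i
        = (1 - t j) * (v 0 i * c i) + t j * (v 0 i * φ (v j) i) - v 0 i * v j i := by
      intro i
      rw [hlab]
      simp only [PiLp.sub_apply, PiLp.add_apply, PiLp.smul_apply, smul_eq_mul]
      ring
    have hsplit : α j = (1 - t j) * (∑ i, v 0 i * c i)
        + t j * (∑ i, v 0 i * φ (v j) i) - ∑ i, v 0 i * v j i := by
      rw [hαeq, Finset.sum_congr rfl (fun i _ => hterm i),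
        Finset.sum_sub_distrib, Finset.sum_add_distrib, ← Finset.mul_sum,
        ← Finset.mul_sum]
    have hA : ∑ i, v 0 i * c i ≤ ‖v 0‖ * ‖c‖ := by
      have h : ∑ i, v 0 i * c i = (inner ℝ (v 0) c : ℝ) := by
        simp [PiLp.inner_apply, RCLike.inner_apply, mul_comm]
      rw [h]; exact real_inner_le_norm _ _
    have hB : ∑ i, v 0 i * φ (v j) i ≤ 0 := by
      apply Finset.sum_nonpos
      intro i _
      exact mul_nonpos_of_nonneg_of_nonpos (hvnonneg 0 i) (hφnp j i)
    have hC : ‖v 0‖ * ‖v 0‖ ≤ ∑ i, v 0 i * v j i := by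
      have h : ∑ i, v 0 i * v 0 i = ‖v 0‖ * ‖v 0‖ := by
        have h2 : ∑ i, v 0 i * v 0 i = (inner ℝ (v 0) (v 0) : ℝ) := by
          rw [PiLp.inner_apply]; simp [RCLike.inner_apply, mul_comm, sq]
        rw [h2, real_inner_self_eq_norm_mul_norm]
      rw [← h]
      apply Finset.sum_le_sum
      intro i _
      exact mul_le_mul_of_nonneg_left (hchain j i) (hvnonneg 0 i)
    rcases ht01 j with h | h
    · rw [hsplit, h]
      nlinarith
    · rw [hsplit, h]
      nlinarith
  -- q = ∑ j, α j • W j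
  have hq : q = ∑ j : Fin (N + 1), α j • W j := by
    funext m
    rw [Finset.sum_apply]
    simp only [Pi.smul_apply, smul_eq_mul]
    have h1 : ∑ k, q k * (L * W) k m = q m := by
      rw [hLW]
      simp [Matrix.one_apply, mul_ite]
    calc q m = ∑ k, q k * (L * W) k m := h1.symm
      _ = ∑ k, q k * ∑ j, L k j * W j m := by
          simp only [Matrix.mul_apply]
      _ = ∑ k, ∑ j, q k * (L k j * W j m) := by
          simp [Finset.mul_sum]
      _ = ∑ j, ∑ k, q k * (L k j * W j m) := Finset.sum_comm
      _ = ∑ j, α j * W j m := by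
          apply Finset.sum_congr rfl
          intro j _
          have h0 : α j = ∑ k, q k * L k j := rfl
          rw [h0, Finset.sum_mul]
          apply Finset.sum_congr rfl
          intro k _
          ring
  have hqNP : LexNP q := by
    rw [hq]
    exact lexNP_sum _ _ (fun j _ => lexNP_smul (hα j) (hWpos j))
  -- q is nonnegative with a positive entry, contradiction with LexNP
  have hqnn : ∀ k, 0 ≤ q k := by
    intro k
    induction k using Fin.cases with
    | zero => rw [hq0]
    | succ i => rw [hqsucc]; exact hvnonneg 0 i
  have hvne : ∃ i : Fin N, 0 < v 0 i := by
    by_contra h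
    push_neg at h
    have hz : v 0 = 0 := by
      ext i
      exact le_antisymm (h i) (hvnonneg 0 i)
    have := hfar 0
    rw [hz, norm_zero] at this
    linarith
  obtain ⟨i0, hi0⟩ := hvne
  classical
  set S : Finset (Fin (N + 1)) := Finset.univ.filter (fun k => q k ≠ 0) with hS
  have hSne : S.Nonempty := by
    refine ⟨i0.succ, ?_⟩
    rw [hS, Finset.mem_filter]
    exact ⟨Finset.mem_univ _, by rw [hqsucc]; exact hi0.ne'⟩
  set j0 := S.min' hSne with hj0
  have hj0mem : j0 ∈ S := Finset.min'_mem _ _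
  have hj0ne : q j0 ≠ 0 := by
    rw [hS, Finset.mem_filter] at hj0mem
    exact hj0mem.2
  have hj0pos : 0 < q j0 := lt_of_le_of_ne (hqnn j0) (Ne.symm hj0ne)
  have hbefore : ∀ i, i < j0 → q i = 0 := by
    intro i hi
    by_contra hne
    have : i ∈ S := by rw [hS, Finset.mem_filter]; exact ⟨Finset.mem_univ _, hne⟩
    have := Finset.min'_le S i this
    exact absurd hi (not_lt.mpr this)
  have := hqNP j0 hbefore
  linarith
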